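/- Let A be an n×n symmetric reducible matrix over a field F with n ≥ 4. Then there exists a matrix B ∈ F^{n×n} with the same principal minors as A such that B is not diagonally equivalent to A (i.e., B ≠ DAD^{-1} and B ≠ DA^T D^{-1} for every invertible diagonal matrix D). -/

import Mathlib

/-- The principal minor of `A` indexed by the set `S` (equal to `1` when `S = ∅`). -/
def principalMinor {F : Type*} [CommRing F] {n : ℕ}
    (A : Matrix (Fin n) (Fin n) F) (S : Finset (Fin n)) : F :=
  (A.submatrix (fun i : S => (i : Fin n)) (fun j : S => (j : Fin n))).det

/-- A square matrix is irreducible if it cannot be brought, by a simultaneous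
permutation of rows and columns, to a block upper triangular form with at least two
diagonal blocks. -/
def Matrix.IsIrreducible' {α : Type*} [Fintype α] [DecidableEq α] {R : Type*} [Zero R]
    (A : Matrix α α R) : Prop :=
  ¬∃ X : Finset α, X.Nonempty ∧ X ≠ Finset.univ ∧ ∀ i ∉ X, ∀ j ∈ X, A i j = 0

/-- For any reducible symmetric matrix `A` (with `n ≥ 4`) there is a matrix with the
same principal minors as `A` that is not diagonally equivalent to `A`. -/
theorem exists_not_diagEquiv_of_symm_reducible {F : Type*} [Field F] {n : ℕ}
    (hn : 4 ≤ n) (A : Matrix (Fin n) (Fin n) F)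
    (hsymm : A.transpose = A) (hA : ¬A.IsIrreducible') :
    ∃ B : Matrix (Fin n) (Fin n) F,
      (∀ S : Finset (Fin n), principalMinor A S = principalMinor B S) ∧
      ∀ d : Fin n → F, (∀ i, d i ≠ 0) →
        B ≠ Matrix.diagonal d * A * Matrix.diagonal (fun i => (d i)⁻¹) ∧
        B ≠ Matrix.diagonal d * A.transpose * Matrix.diagonal fun i => (d i)⁻¹ := by
  classical
  rw [Matrix.IsIrreducible', not_not] at hA
  obtain ⟨X, hXne, hXuniv, hX⟩ := hA
  obtain ⟨i₀, hi₀⟩ := hXne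
  obtain ⟨j₀, hj₀⟩ : ∃ j, j ∉ X := by
    by_contra h
    push_neg at h
    exact hXuniv (Finset.eq_univ_iff_forall.2 h)
  have hsym : ∀ i j, A i j = A j i := fun i j =>
    congrFun (congrFun hsymm.symm i) j
  have hA0 : A i₀ j₀ = 0 := by rw [hsym]; exact hX j₀ hj₀ i₀ hi₀
  set B : Matrix (Fin n) (Fin n) F :=
    fun i j => if i = i₀ ∧ j = j₀ then 1 else A i j with hB
  have hBeq : ∀ i j, ¬(i = i₀ ∧ j = j₀) → B i j = A i j := by
    intro i j h; simp [hB, if_neg h]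
  refine ⟨B, ?_, ?_⟩
  · intro S
    set p : S → Prop := fun i => (i : Fin n) ∈ X with hp
    have hAz : ∀ i, ¬p i → ∀ j, p j →
        (A.submatrix (fun i : S => (i : Fin n)) (fun j : S => (j : Fin n))) i j = 0 := by
      intro i hi j hj
      exact hX _ hi _ hj
    have hBz : ∀ i, ¬p i → ∀ j, p j →
        (B.submatrix (fun i : S => (i : Fin n)) (fun j : S => (j : Fin n))) i j = 0 := by
      intro i hi j hj
      have : ¬((i : Fin n) = i₀ ∧ (j : Fin n) = j₀) := by
        rintro ⟨h1, -⟩; exact hi (show ((i:S):Fin n) ∈ X by rw [h1]; exact hi₀)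
      simp only [Matrix.submatrix_apply, hBeq _ _ this]
      exact hX _ hi _ hj
    unfold principalMinor
    rw [Matrix.twoBlockTriangular_det _ p hAz, Matrix.twoBlockTriangular_det _ p hBz]
    congr 1
    · congr 1
      ext i j
      have : ¬((i.1 : Fin n) = i₀ ∧ (j.1 : Fin n) = j₀) := by
        rintro ⟨-, h2⟩; exact hj₀ (show j₀ ∈ X by rw [← h2]; exact j.2)
      simp [Matrix.toSquareBlockProp, hBeq _ _ this]
    · congr 1
      ext i j
      have : ¬((i.1 : Fin n) = i₀ ∧ (j.1 : Fin n) = j₀) := by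
        rintro ⟨h1, -⟩; exact i.2 (show (i.1.1 : Fin n) ∈ X by rw [h1]; exact hi₀)
      simp [Matrix.toSquareBlockProp, hBeq _ _ this]
  · intro d hd
    have hB1 : B i₀ j₀ = 1 := by simp [hB]
    constructor <;> intro hEq
    · have h := congrFun (congrFun hEq i₀) j₀
      rw [hB1, Matrix.mul_diagonal, Matrix.diagonal_mul, hA0] at h
      simp at h
    · rw [hsymm] at hEq
      have h := congrFun (congrFun hEq i₀) j₀
      rw [hB1, Matrix.mul_diagonal, Matrix.diagonal_mul, hA0] at h
      simp at h
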